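/- arXiv:1603.00697 — 4 statements merged into one kernel-verified Lean document; each statement's English description precedes it below -/
import Mathlib

section
/- Two quaternions p, q ∈ ℍ are similar, i.e. there exists s ∈ ℍ \ {0} with p = s⁻¹ · q · s, if and only if re p = re q and |im p| = |im q|. Consequently the similarity class of p is [p] = {p' ∈ ℍ : re p' = re p and |im p'| = |im p|}. -/
open Quaternion MeasureTheory ENNReal

noncomputable section

/-- `q` belongs to the imaginary unit sphere `𝕊`. -/
def inS (q : ℍ[ℝ]) : Prop := star q = -q ∧ ‖q‖ = 1

/-- The slice `ℂ_m = {α + mβ : α, β ∈ ℝ}`. -/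
def quatSlice (m : ℍ[ℝ]) : Set ℍ[ℝ] := {q | ∃ α β : ℝ, q = (α : ℍ[ℝ]) + m * (β : ℍ[ℝ])}

private lemma quat_re_comm (a b : ℍ[ℝ]) : (a * b).re = (b * a).re := by
  simp only [Quaternion.re_mul]; ring

private lemma similar_aux (p q : ℍ[ℝ]) :
    (∃ s : ℍ[ℝ], s ≠ 0 ∧ p = s⁻¹ * q * s) ↔ p.re = q.re ∧ ‖p.im‖ = ‖q.im‖ := by
  constructor
  · rintro ⟨s, hs, rfl⟩
    constructor
    · rw [quat_re_comm, ← mul_assoc, mul_inv_cancel₀ hs, one_mul]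
    · have hs' : ‖s‖ ≠ 0 := norm_ne_zero_iff.mpr hs
      have hnorm : ‖s⁻¹ * q * s‖ = ‖q‖ := by
        rw [norm_mul, norm_mul, norm_inv]
        field_simp
      have h1 : normSq (s⁻¹ * q * s) = normSq q := by
        rw [normSq_eq_norm_mul_self, normSq_eq_norm_mul_self, hnorm]
      have hre : (s⁻¹ * q * s).re = q.re := by
        rw [quat_re_comm, ← mul_assoc, mul_inv_cancel₀ hs, one_mul]
      have h2 : normSq (s⁻¹ * q * s).im = normSq q.im := by
        rw [Quaternion.normSq_def', Quaternion.normSq_def'] at h1 ⊢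
        simp only [Quaternion.re_im, Quaternion.imI_im, Quaternion.imJ_im,
          Quaternion.imK_im] at *
        rw [hre] at h1
        linarith
      have h3 : ‖(s⁻¹ * q * s).im‖ * ‖(s⁻¹ * q * s).im‖ = ‖q.im‖ * ‖q.im‖ := by
        rw [← normSq_eq_norm_mul_self, ← normSq_eq_norm_mul_self, h2]
      nlinarith [norm_nonneg (s⁻¹ * q * s).im, norm_nonneg q.im]
  · rintro ⟨hre, him⟩
    have h2 : p.imI ^ 2 + p.imJ ^ 2 + p.imK ^ 2 = q.imI ^ 2 + q.imJ ^ 2 + q.imK ^ 2 := by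
      have := congrArg (fun x : ℝ => x * x) him
      beta_reduce at this
      rw [← normSq_eq_norm_mul_self, ← normSq_eq_norm_mul_self,
        Quaternion.normSq_def', Quaternion.normSq_def'] at this
      simpa [Quaternion.re_im, Quaternion.imI_im, Quaternion.imJ_im, Quaternion.imK_im]
        using this
    -- helper to conclude from q * s = s * p with s ≠ 0
    have key : ∀ s : ℍ[ℝ], s ≠ 0 → q * s = s * p → ∃ s : ℍ[ℝ], s ≠ 0 ∧ p = s⁻¹ * q * s := by
      intro s hs h
      exact ⟨s, hs, by rw [mul_assoc, h, ← mul_assoc, inv_mul_cancel₀ hs, one_mul]⟩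
    by_cases hsum : p.im + q.im = 0
    · -- q.im = -p.im
      have hI : q.imI = -p.imI := by
        have := congrArg QuaternionAlgebra.imI hsum
        simp [Quaternion.imI_im] at this; linarith
      have hJ : q.imJ = -p.imJ := by
        have := congrArg QuaternionAlgebra.imJ hsum
        simp [Quaternion.imJ_im] at this; linarith
      have hK : q.imK = -p.imK := by
        have := congrArg QuaternionAlgebra.imK hsum
        simp [Quaternion.imK_im] at this; linarith
      by_cases hpim : p.imI = 0 ∧ p.imJ = 0 ∧ p.imK = 0
      · -- p = q
        refine ⟨1, one_ne_zero, ?_⟩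
        obtain ⟨h1', h2', h3'⟩ := hpim
        apply Quaternion.ext <;>
          simp [hre, h1', h2', h3', hI, hJ, hK]
      · by_cases hij : p.imI = 0 ∧ p.imJ = 0
        · -- p.imK ≠ 0, take t = i
          apply key (@id ℍ[ℝ] ⟨0, 1, 0, 0⟩)
          · intro h
            have := congrArg QuaternionAlgebra.imI h
            simp [QuaternionAlgebra.ext_iff, id] at this
          · apply Quaternion.ext <;>
              simp only [Quaternion.re_mul, Quaternion.imI_mul, Quaternion.imJ_mul,
                Quaternion.imK_mul] <;>
              · obtain ⟨h1', h2'⟩ := hij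
                simp [hre, hI, hJ, hK, h1', h2', id] <;> ring
        · -- take t = p.imJ i - p.imI j
          apply key (@id ℍ[ℝ] ⟨0, p.imJ, -p.imI, 0⟩)
          · intro h
            rw [Quaternion.ext_iff] at h
            simp [id] at h
            exact hij ⟨h.2, h.1⟩
          · apply Quaternion.ext <;>
              simp only [Quaternion.re_mul, Quaternion.imI_mul, Quaternion.imJ_mul,
                Quaternion.imK_mul] <;>
              · simp [hre, hI, hJ, hK, id] <;> ring
    · apply key (p.im + q.im) hsum
      apply Quaternion.ext
      · simp only [Quaternion.re_mul, Quaternion.re_add, Quaternion.imI_add, Quaternion.imJ_add,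
          Quaternion.imK_add, Quaternion.re_im, Quaternion.imI_im, Quaternion.imJ_im,
          Quaternion.imK_im]
        linear_combination h2
      · simp only [Quaternion.imI_mul, Quaternion.re_add, Quaternion.imI_add, Quaternion.imJ_add,
          Quaternion.imK_add, Quaternion.re_im, Quaternion.imI_im, Quaternion.imJ_im,
          Quaternion.imK_im]
        linear_combination -(p.imI + q.imI) * hre
      · simp only [Quaternion.imJ_mul, Quaternion.re_add, Quaternion.imI_add, Quaternion.imJ_add,
          Quaternion.imK_add, Quaternion.re_im, Quaternion.imI_im, Quaternion.imJ_im,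
          Quaternion.imK_im]
        linear_combination -(p.imJ + q.imJ) * hre
      · simp only [Quaternion.imK_mul, Quaternion.re_add, Quaternion.imI_add, Quaternion.imJ_add,
          Quaternion.imK_add, Quaternion.re_im, Quaternion.imI_im, Quaternion.imJ_im,
          Quaternion.imK_im]
        linear_combination -(p.imK + q.imK) * hre

/-- Two quaternions are similar iff they have the same real part and the same
modulus of the imaginary part; consequently the similarity class of `p` is
`{p' : re p' = re p, |im p'| = |im p|}`. -/
theorem similar_iff_re_eq_and_norm_im_eq (p q : ℍ[ℝ]) :
    ((∃ s : ℍ[ℝ], s ≠ 0 ∧ p = s⁻¹ * q * s) ↔ p.re = q.re ∧ ‖p.im‖ = ‖q.im‖) ∧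
    {p' : ℍ[ℝ] | ∃ s : ℍ[ℝ], s ≠ 0 ∧ p' = s⁻¹ * p * s} =
      {p' : ℍ[ℝ] | p'.re = p.re ∧ ‖p'.im‖ = ‖p.im‖} := by
  exact ⟨similar_aux p q, Set.ext fun p' => similar_aux p' p⟩
end
end

section
/- Let (Ω, μ) be a measure space and let m, n ∈ 𝕊 with m · n = - n · m. Every f ∈ L²(Ω; ℍ; μ) can be written uniquely as f = F₁ + F₂ · n, where F₁, F₂ ∈ L²(Ω; ℍ; μ) take values in ℂ_m μ-almost everywhere; moreover ‖f‖² = ‖F₁‖² + ‖F₂‖². -/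
open Quaternion MeasureTheory ENNReal

noncomputable section

lemma inS.re_eq {m : ℍ[ℝ]} (h : inS m) : m.re = 0 := by
  have := congrArg QuaternionAlgebra.re h.1
  simp at this; linarith

lemma inS.normSq_eq {m : ℍ[ℝ]} (h : inS m) : normSq m = 1 := by
  rw [Quaternion.normSq_eq_norm_mul_self, h.2, one_mul]

lemma inS.mul_self {m : ℍ[ℝ]} (h : inS m) : m * m = -1 := by
  have h1 : m * star m = ((normSq m : ℝ) : ℍ[ℝ]) := Quaternion.self_mul_star m
  rw [h.1, h.normSq_eq] at h1
  have h2 : -(m*m) = 1 := by rw [← mul_neg]; simpa using h1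
  have := congrArg Neg.neg h2
  simpa using this

lemma inS.ne_zero {m : ℍ[ℝ]} (h : inS m) : m ≠ 0 := by
  intro h0
  have := h.2
  rw [h0] at this
  simp at this

lemma slice_of_comm {m : ℍ[ℝ]} (hm : inS m) {q : ℍ[ℝ]} (h : m * q = q * m) :
    q ∈ quatSlice m := by
  refine ⟨q.re, m.imI*q.imI + m.imJ*q.imJ + m.imK*q.imK, ?_⟩
  have hre := hm.re_eq
  have hns : m.re^2 + m.imI^2 + m.imJ^2 + m.imK^2 = 1 := by
    have := hm.normSq_eq; rwa [Quaternion.normSq_def'] at this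
  rw [Quaternion.ext_iff] at h
  obtain ⟨h1, h2, h3, h4⟩ := h
  simp only [Quaternion.re_mul, Quaternion.imI_mul, Quaternion.imJ_mul, Quaternion.imK_mul] at h1 h2 h3 h4
  have e2 : m.imJ*q.imK - m.imK*q.imJ = 0 := by linear_combination h2/2
  have e3 : m.imK*q.imI - m.imI*q.imK = 0 := by linear_combination h3/2
  have e4 : m.imI*q.imJ - m.imJ*q.imI = 0 := by linear_combination h4/2
  rw [Quaternion.ext_iff]
  simp only [Quaternion.re_add, Quaternion.imI_add, Quaternion.imJ_add, Quaternion.imK_add,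
    Quaternion.re_mul, Quaternion.imI_mul, Quaternion.imJ_mul, Quaternion.imK_mul,
    Quaternion.re_coe, Quaternion.imI_coe, Quaternion.imJ_coe, Quaternion.imK_coe]
  refine ⟨by linear_combination (-(m.imI*q.imI + m.imJ*q.imJ + m.imK*q.imK))*hre,
    by linear_combination (-q.imI)*hns + q.imI*m.re*hre - m.imJ*e4 + m.imK*e3,
    by linear_combination (-q.imJ)*hns + q.imJ*m.re*hre + m.imI*e4 - m.imK*e2,
    by linear_combination (-q.imK)*hns + q.imK*m.re*hre - m.imI*e3 + m.imJ*e2⟩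

lemma comm_of_slice {m q : ℍ[ℝ]} (h : q ∈ quatSlice m) : m * q = q * m := by
  obtain ⟨α, β, rfl⟩ := h
  simp [mul_add, add_mul, Quaternion.coe_mul_eq_smul, Quaternion.mul_coe_eq_smul,
    mul_smul_comm, smul_mul_assoc, mul_assoc]

lemma quatSlice_sub {m a b : ℍ[ℝ]} (ha : a ∈ quatSlice m) (hb : b ∈ quatSlice m) :
    a - b ∈ quatSlice m := by
  obtain ⟨α₁, β₁, rfl⟩ := ha
  obtain ⟨α₂, β₂, rfl⟩ := hb
  refine ⟨α₁ - α₂, β₁ - β₂, ?_⟩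
  rw [Quaternion.coe_sub, Quaternion.coe_sub, mul_sub]
  abel

lemma normSq_para (a b : ℍ[ℝ]) : normSq (a+b) + normSq (a-b) = 2*(normSq a + normSq b) := by
  simp only [Quaternion.normSq_def', Quaternion.re_add, Quaternion.imI_add, Quaternion.imJ_add,
    Quaternion.imK_add, Quaternion.re_sub, Quaternion.imI_sub, Quaternion.imJ_sub,
    Quaternion.imK_sub]
  ring

lemma aux_comm1 {m : ℍ[ℝ]} (hm : inS m) (q : ℍ[ℝ]) :
    m * (q - m*q*m) = (q - m*q*m) * m := by
  have hmm := hm.mul_self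
  have h₁ : m*(m*q*m) = -(q*m) := by
    rw [show m*(m*q*m) = (m*m)*(q*m) from by noncomm_ring, hmm, neg_one_mul]
  have h₂ : (m*q*m)*m = -(m*q) := by
    rw [show (m*q*m)*m = (m*q)*(m*m) from by noncomm_ring, hmm, mul_neg_one]
  rw [mul_sub, sub_mul, h₁, h₂]
  abel

lemma aux_anti {m : ℍ[ℝ]} (hm : inS m) (q : ℍ[ℝ]) :
    m * (q + m*q*m) = -((q + m*q*m) * m) := by
  have hmm := hm.mul_self
  have h₁ : m*(m*q*m) = -(q*m) := by
    rw [show m*(m*q*m) = (m*m)*(q*m) from by noncomm_ring, hmm, neg_one_mul]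
  have h₂ : (m*q*m)*m = -(m*q) := by
    rw [show (m*q*m)*m = (m*q)*(m*m) from by noncomm_ring, hmm, mul_neg_one]
  rw [mul_add, add_mul, h₁, h₂]
  abel

/-- pointwise first component -/
noncomputable def ptA (m q : ℍ[ℝ]) : ℍ[ℝ] := (2:ℝ)⁻¹ • (q - m*q*m)

/-- pointwise second component -/
noncomputable def ptB (m n q : ℍ[ℝ]) : ℍ[ℝ] := -(((2:ℝ)⁻¹ • (q + m*q*m)) * n)

lemma ptA_mem {m : ℍ[ℝ]} (hm : inS m) (q : ℍ[ℝ]) : ptA m q ∈ quatSlice m :=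
  slice_of_comm hm (by rw [ptA, mul_smul_comm, smul_mul_assoc, aux_comm1 hm q])

lemma ptB_mem {m n : ℍ[ℝ]} (hm : inS m) (hanti : m * n = -(n * m)) (q : ℍ[ℝ]) :
    ptB m n q ∈ quatSlice m := by
  refine slice_of_comm hm ?_
  set r : ℍ[ℝ] := (2:ℝ)⁻¹ • (q + m*q*m) with hr
  have h5 : m * r = -(r * m) := by
    rw [hr, mul_smul_comm, aux_anti hm q, smul_neg, smul_mul_assoc]
  have h6 : m * (r * n) = (r * n) * m := by
    calc m*(r*n) = (m*r)*n := by rw [mul_assoc]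
      _ = (-(r*m))*n := by rw [h5]
      _ = -(r*(m*n)) := by rw [neg_mul, mul_assoc]
      _ = r*(n*m) := by rw [hanti, mul_neg, neg_neg]
      _ = (r*n)*m := by rw [mul_assoc]
  rw [ptB, mul_neg, neg_mul, h6]

lemma ptA_add_ptB {m n : ℍ[ℝ]} (hn : inS n) (q : ℍ[ℝ]) :
    ptA m q + ptB m n q * n = q := by
  have hb : ptB m n q * n = (2:ℝ)⁻¹ • (q + m*q*m) := by
    rw [ptB, neg_mul, mul_assoc, hn.mul_self, mul_neg_one, neg_neg]
  rw [ptA, hb]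
  module

lemma normSq_ptAB {m n : ℍ[ℝ]} (hm : inS m) (hn : inS n) (q : ℍ[ℝ]) :
    normSq q = normSq (ptA m q) + normSq (ptB m n q) := by
  have hb : normSq (ptB m n q) = normSq ((2:ℝ)⁻¹ • (q + m*q*m)) := by
    rw [ptB, normSq_neg, map_mul, hn.normSq_eq, mul_one]
  have h1 : ptA m q + (2:ℝ)⁻¹ • (q + m*q*m) = q := by rw [ptA]; module
  have h2 : ptA m q - (2:ℝ)⁻¹ • (q + m*q*m) = -(m*q*m) := by rw [ptA]; module
  have h3 := normSq_para (ptA m q) ((2:ℝ)⁻¹ • (q + m*q*m))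
  rw [h1, h2, normSq_neg] at h3
  have h4 : normSq (m*q*m) = normSq q := by
    rw [map_mul, map_mul, hm.normSq_eq]; ring
  rw [h4] at h3
  rw [hb]; linarith

lemma unique_pt {m n : ℍ[ℝ]} (hm : inS m) (hn : inS n) (hanti : m * n = -(n * m))
    {a₁ b₁ a₂ b₂ : ℍ[ℝ]} (ha₁ : a₁ ∈ quatSlice m) (hb₁ : b₁ ∈ quatSlice m)
    (ha₂ : a₂ ∈ quatSlice m) (hb₂ : b₂ ∈ quatSlice m)
    (heq : a₁ + b₁ * n = a₂ + b₂ * n) : a₁ = a₂ ∧ b₁ = b₂ := by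
  have hab : a₁ - a₂ = (b₂ - b₁) * n := by
    rw [sub_mul]; linear_combination (norm := abel) heq
  have hcomm : m * (a₁ - a₂) = (a₁ - a₂) * m := comm_of_slice (quatSlice_sub ha₁ ha₂)
  have hbcomm : m * (b₂ - b₁) = (b₂ - b₁) * m := comm_of_slice (quatSlice_sub hb₂ hb₁)
  have hanti2 : m * ((b₂ - b₁) * n) = -(((b₂ - b₁) * n) * m) := by
    calc m * ((b₂-b₁)*n) = (m*(b₂-b₁))*n := by rw [mul_assoc]
      _ = ((b₂-b₁)*m)*n := by rw [hbcomm]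
      _ = (b₂-b₁)*(m*n) := by rw [mul_assoc]
      _ = -(((b₂-b₁)*n)*m) := by rw [hanti, mul_neg, mul_assoc]
  rw [← hab] at hanti2
  rw [hcomm] at hanti2
  have h0 : (a₁ - a₂) * m = 0 := by
    have h2 : (2:ℝ) • ((a₁ - a₂) * m) = 0 := by
      rw [two_smul]; nth_rewrite 1 [hanti2]; abel
    have := smul_eq_zero.mp h2
    rcases this with h | h
    · norm_num at h
    · exact h
  have ha0 : a₁ - a₂ = 0 := by
    rcases mul_eq_zero.mp h0 with h | h
    · exact h
    · exact absurd h hm.ne_zero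
  have hb0 : b₂ - b₁ = 0 := by
    rw [ha0] at hab
    rcases mul_eq_zero.mp hab.symm with h | h
    · exact h
    · exact absurd h hn.ne_zero
  constructor
  · linear_combination (norm := abel) ha0
  · linear_combination (norm := abel) -hb0

/-- Every `f ∈ L²(Ω; ℍ; μ)` decomposes uniquely as `f = F₁ + F₂ · n` with
`F₁, F₂` valued in `ℂ_m` a.e., and `‖f‖² = ‖F₁‖² + ‖F₂‖²`. -/
theorem L2_slice_decomposition {Ω : Type*} [MeasurableSpace Ω]
    (μ : Measure Ω) (m n : ℍ[ℝ]) (hm : inS m) (hn : inS n)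
    (hanti : m * n = -(n * m)) (f : Lp ℍ[ℝ] 2 μ) :
    ∃ F₁ F₂ : Lp ℍ[ℝ] 2 μ,
      (∀ᵐ x ∂μ, F₁ x ∈ quatSlice m) ∧ (∀ᵐ x ∂μ, F₂ x ∈ quatSlice m) ∧
      (∀ᵐ x ∂μ, f x = F₁ x + F₂ x * n) ∧
      ‖f‖ ^ 2 = ‖F₁‖ ^ 2 + ‖F₂‖ ^ 2 ∧
      ∀ G₁ G₂ : Lp ℍ[ℝ] 2 μ,
        (∀ᵐ x ∂μ, G₁ x ∈ quatSlice m) → (∀ᵐ x ∂μ, G₂ x ∈ quatSlice m) →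
        (∀ᵐ x ∂μ, f x = G₁ x + G₂ x * n) → G₁ = F₁ ∧ G₂ = F₂ := by
  classical
  set Lm := ContinuousLinearMap.mul ℝ ℍ[ℝ] m with hLm
  set Rm := (ContinuousLinearMap.mul ℝ ℍ[ℝ]).flip m with hRm
  set Rn := (ContinuousLinearMap.mul ℝ ℍ[ℝ]).flip n with hRn
  set P₁ : ℍ[ℝ] →L[ℝ] ℍ[ℝ] := (2:ℝ)⁻¹ • (ContinuousLinearMap.id ℝ ℍ[ℝ] - Lm.comp Rm)
    with hP₁def
  set P₂ : ℍ[ℝ] →L[ℝ] ℍ[ℝ] :=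
    -(Rn.comp ((2:ℝ)⁻¹ • (ContinuousLinearMap.id ℝ ℍ[ℝ] + Lm.comp Rm))) with hP₂def
  have hP₁ : ∀ q, P₁ q = ptA m q := by
    intro q
    simp only [hP₁def, hLm, hRm, ContinuousLinearMap.smul_apply, ContinuousLinearMap.sub_apply,
      ContinuousLinearMap.id_apply, ContinuousLinearMap.comp_apply, ContinuousLinearMap.flip_apply,
      ContinuousLinearMap.mul_apply']
    rw [ptA, mul_assoc]
  have hP₂ : ∀ q, P₂ q = ptB m n q := by
    intro q
    simp only [hP₂def, hLm, hRm, hRn, ContinuousLinearMap.neg_apply,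
      ContinuousLinearMap.comp_apply, ContinuousLinearMap.smul_apply,
      ContinuousLinearMap.add_apply, ContinuousLinearMap.id_apply,
      ContinuousLinearMap.flip_apply, ContinuousLinearMap.mul_apply']
    rw [ptB, mul_assoc]
  set F₁ := P₁.compLp f with hF₁def
  set F₂ := P₂.compLp f with hF₂def
  have hF₁ : ∀ᵐ x ∂μ, F₁ x = ptA m (f x) :=
    (P₁.coeFn_compLp f).mono fun x hx => by rw [hx, hP₁]
  have hF₂ : ∀ᵐ x ∂μ, F₂ x = ptB m n (f x) :=
    (P₂.coeFn_compLp f).mono fun x hx => by rw [hx, hP₂]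
  have hmem₁ : ∀ᵐ x ∂μ, F₁ x ∈ quatSlice m :=
    hF₁.mono fun x hx => hx ▸ ptA_mem hm (f x)
  have hmem₂ : ∀ᵐ x ∂μ, F₂ x ∈ quatSlice m :=
    hF₂.mono fun x hx => hx ▸ ptB_mem hm hanti (f x)
  have hdecomp : ∀ᵐ x ∂μ, f x = F₁ x + F₂ x * n := by
    filter_upwards [hF₁, hF₂] with x h1 h2
    rw [h1, h2, ptA_add_ptB hn]
  have hnorm : ∀ g : Lp ℍ[ℝ] 2 μ, ‖g‖^2 = ∫ x, (normSq (g x) : ℝ) ∂μ := by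
    intro g
    rw [← real_inner_self_eq_norm_sq, MeasureTheory.L2.inner_def]
    simp_rw [Quaternion.inner_self]
  have hi : ∀ g : Lp ℍ[ℝ] 2 μ, Integrable (fun x => (normSq (g x) : ℝ)) μ := fun g =>
    (MeasureTheory.L2.integrable_inner (𝕜 := ℝ) g g).congr
      (Filter.Eventually.of_forall fun x => Quaternion.inner_self _)
  refine ⟨F₁, F₂, hmem₁, hmem₂, hdecomp, ?_, ?_⟩
  · rw [hnorm f, hnorm F₁, hnorm F₂, ← integral_add (hi F₁) (hi F₂)]
    refine integral_congr_ae ?_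
    filter_upwards [hF₁, hF₂] with x h1 h2
    rw [h1, h2]
    exact normSq_ptAB hm hn (f x)
  · intro G₁ G₂ hG₁ hG₂ hGeq
    have hall : ∀ᵐ x ∂μ, G₁ x = F₁ x ∧ G₂ x = F₂ x := by
      filter_upwards [hG₁, hG₂, hGeq, hdecomp, hmem₁, hmem₂] with x g1 g2 ge de m1 m2
      exact unique_pt hm hn hanti g1 g2 m1 m2 (ge.symm.trans de)
    exact ⟨Lp.ext (hall.mono fun x h => h.1), Lp.ext (hall.mono fun x h => h.2)⟩
end
end

section
/- Let m ∈ 𝕊 and q ∈ ℍ. Then λ := re q + m · |im q| is similar to q (there exists s ∈ ℍ \ {0} with λ = s⁻¹ · q · s), and λ is the unique element of ℂ_m of the form a + m b with b ≥ 0 that is similar to q; that is, every quaternion is similar to exactly one point of the closed upper half plane ℂ_m⁺ := {a + m b : a ∈ ℝ, b ≥ 0}. -/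
open Quaternion MeasureTheory ENNReal

noncomputable section

lemma aux_mul_re_comm (x y : ℍ[ℝ]) : (x * y).re = (y * x).re := by
  simp only [Quaternion.re_mul]; ring

lemma aux_im_mul_self (x : ℍ[ℝ]) : x.im * x.im = -((‖x.im‖ ^ 2 : ℝ) : ℍ[ℝ]) := by
  have h : star x.im * x.im = ((Quaternion.normSq x.im : ℝ) : ℍ[ℝ]) :=
    Quaternion.star_mul_self _
  rw [Quaternion.star_im, neg_mul] at h
  have h2 : Quaternion.normSq x.im = ‖x.im‖ ^ 2 := by
    rw [Quaternion.normSq_eq_norm_mul_self]; ring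
  rw [h2] at h
  exact neg_eq_iff_eq_neg.mp h

/-- Every quaternion is similar to exactly one point of the closed upper half
plane `ℂ_m⁺`, namely `re q + m |im q|`. -/
theorem similar_to_unique_upper_halfplane_point (m : ℍ[ℝ]) (hm : inS m) (q : ℍ[ℝ]) :
    (∃ s : ℍ[ℝ], s ≠ 0 ∧
      ((q.re : ℝ) : ℍ[ℝ]) + m * ((‖q.im‖ : ℝ) : ℍ[ℝ]) = s⁻¹ * q * s) ∧
    ∀ a b : ℝ, 0 ≤ b →
      (∃ s : ℍ[ℝ], s ≠ 0 ∧ (a : ℍ[ℝ]) + m * (b : ℍ[ℝ]) = s⁻¹ * q * s) →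
      (a : ℍ[ℝ]) + m * (b : ℍ[ℝ]) =
        ((q.re : ℝ) : ℍ[ℝ]) + m * ((‖q.im‖ : ℝ) : ℍ[ℝ]) := by
  obtain ⟨hm1, hm2⟩ := hm
  have hmre : m.re = 0 := Quaternion.star_eq_neg.mp hm1
  have hmm : m * m = -1 := by
    have h := Quaternion.star_mul_self m
    rw [hm1, neg_mul] at h
    have h2 : Quaternion.normSq m = 1 := by
      rw [Quaternion.normSq_eq_norm_mul_self, hm2]; ring
    rw [h2] at h
    have h3 : m * m = -((1 : ℝ) : ℍ[ℝ]) := neg_eq_iff_eq_neg.mp h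
    simpa using h3
  constructor
  · -- existence
    by_cases hq0 : q.im = 0
    · refine ⟨1, one_ne_zero, ?_⟩
      have hq : q = ((q.re : ℝ) : ℍ[ℝ]) := by
        conv_lhs => rw [← Quaternion.re_add_im q]
        rw [hq0, add_zero]
      simp [hq0, ← hq]
    · set b : ℝ := ‖q.im‖ with hb
      have hbne : b ≠ 0 := by simpa [hb] using hq0
      set μ : ℍ[ℝ] := m * (b : ℍ[ℝ]) with hμdef
      have hμμ : μ * μ = -((b ^ 2 : ℝ) : ℍ[ℝ]) := by
        rw [hμdef]
        calc m * (b : ℍ[ℝ]) * (m * (b : ℍ[ℝ]))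
            = m * ((b : ℍ[ℝ]) * m) * (b : ℍ[ℝ]) := by noncomm_ring
          _ = m * m * ((b : ℍ[ℝ]) * (b : ℍ[ℝ])) := by
              rw [Quaternion.coe_commutes]; noncomm_ring
          _ = -((b ^ 2 : ℝ) : ℍ[ℝ]) := by
              rw [hmm, ← Quaternion.coe_mul, ← sq, neg_one_mul]
      have hxx : q.im * q.im = -((b ^ 2 : ℝ) : ℍ[ℝ]) := aux_im_mul_self q
      have key : ∀ t : ℍ[ℝ], q.im * (q.im * t + t * μ) = (q.im * t + t * μ) * μ := by
        intro t
        have h1 : q.im * (q.im * t + t * μ) = (q.im * q.im) * t + q.im * t * μ := by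
          noncomm_ring
        have h2 : (q.im * t + t * μ) * μ = q.im * t * μ + t * (μ * μ) := by
          noncomm_ring
        rw [h1, h2, hxx, hμμ]
        have h3 : t * -((b ^ 2 : ℝ) : ℍ[ℝ]) = -((b ^ 2 : ℝ) : ℍ[ℝ]) * t := by
          rw [mul_neg, neg_mul, Quaternion.coe_commutes]
        rw [h3]; abel
      have main : ∀ s : ℍ[ℝ], s ≠ 0 → q.im * s = s * μ →
          ((q.re : ℝ) : ℍ[ℝ]) + m * ((‖q.im‖ : ℝ) : ℍ[ℝ]) = s⁻¹ * q * s := by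
        intro s hs hcom
        have hq : q = ((q.re : ℝ) : ℍ[ℝ]) + q.im := (Quaternion.re_add_im q).symm
        have h3 : s * (((q.re : ℝ) : ℍ[ℝ]) + μ) = q * s := by
          rw [mul_add, ← Quaternion.coe_commutes, ← hcom]
          conv_rhs => rw [hq]
          rw [add_mul]
        calc ((q.re : ℝ) : ℍ[ℝ]) + m * ((‖q.im‖ : ℝ) : ℍ[ℝ])
            = s⁻¹ * (s * (((q.re : ℝ) : ℍ[ℝ]) + μ)) := by
              rw [← mul_assoc, inv_mul_cancel₀ hs, one_mul]
          _ = s⁻¹ * q * s := by rw [h3, mul_assoc]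
      by_cases h1 : q.im * 1 + 1 * μ = 0
      case neg => exact ⟨_, h1, main _ h1 (key 1)⟩
      have hqim : q.im = -μ := by
        rw [mul_one, one_mul] at h1
        exact eq_neg_of_add_eq_zero_left h1
      -- try t = i and t = j
      set I : ℍ[ℝ] := ⟨0, 1, 0, 0⟩ with hIdef
      set J : ℍ[ℝ] := ⟨0, 0, 1, 0⟩ with hJdef
      by_cases hI : q.im * I + I * μ = 0
      case neg => exact ⟨_, hI, main _ hI (key I)⟩
      by_cases hJ : q.im * J + J * μ = 0
      case neg => exact ⟨_, hJ, main _ hJ (key J)⟩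
      exfalso
      -- from these, I and J commute with m, forcing m = 0
      rw [hqim, neg_mul, neg_add_eq_zero] at hI hJ
      rw [hμdef] at hI hJ
      have hI' : I * m = m * I := by
        have h := hI
        rw [Quaternion.mul_coe_eq_smul, smul_mul_assoc, mul_smul_comm] at h
        exact (smul_right_injective _ hbne h).symm
      have hJ' : J * m = m * J := by
        have h := hJ
        rw [Quaternion.mul_coe_eq_smul, smul_mul_assoc, mul_smul_comm] at h
        exact (smul_right_injective _ hbne h).symm
      rw [Quaternion.ext_iff] at hI' hJ'
      simp only [Quaternion.re_mul, Quaternion.imI_mul, Quaternion.imJ_mul,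
        Quaternion.imK_mul] at hI' hJ'
      simp only [hIdef, hJdef] at hI' hJ'
      obtain ⟨e1, e2, e3, e4⟩ := hI'
      obtain ⟨f1, f2, f3, f4⟩ := hJ'
      have hm0 : m = 0 := by
        ext <;> simp <;> linarith
      rw [hm0] at hm2
      simp at hm2
  · -- uniqueness
    rintro a b hb ⟨s, hs, heq⟩
    have hre : a = q.re := by
      have h1 : ((a : ℍ[ℝ]) + m * (b : ℍ[ℝ])).re = a := by
        simp [Quaternion.re_mul, hmre]
      have h2 : (s⁻¹ * q * s).re = q.re := by
        rw [aux_mul_re_comm, ← mul_assoc, mul_inv_cancel₀ hs, one_mul]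
      rw [heq, h2] at h1
      exact h1.symm
    have him : m * (b : ℍ[ℝ]) = s⁻¹ * q.im * s := by
      have hq : q = ((q.re : ℝ) : ℍ[ℝ]) + q.im := (Quaternion.re_add_im q).symm
      have h3 : s⁻¹ * q * s = ((q.re : ℝ) : ℍ[ℝ]) + s⁻¹ * q.im * s := by
        conv_lhs => rw [hq]
        rw [mul_add, add_mul]
        congr 1
        rw [← Quaternion.coe_commutes, mul_assoc, inv_mul_cancel₀ hs, mul_one]
      rw [h3, hre] at heq
      exact add_left_cancel heq
    have hbn : b = ‖q.im‖ := by
      have hsn : ‖s‖ ≠ 0 := norm_ne_zero_iff.mpr hs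
      have h4 : ‖m * (b : ℍ[ℝ])‖ = b := by
        rw [norm_mul, hm2, one_mul, Quaternion.norm_coe, Real.norm_eq_abs, abs_of_nonneg hb]
      have h5 : ‖s⁻¹ * q.im * s‖ = ‖q.im‖ := by
        rw [norm_mul, norm_mul, norm_inv]
        field_simp
      rw [him, h5] at h4
      exact h4.symm
    rw [hre, hbn]
end
end

section
/- Let (Ω, μ) be a measure space and let m, n ∈ 𝕊 with m · n = - n · m. The map Φ on L²(Ω; ℍ; μ) defined by (Φ f)(x) = f(x) · n is a surjective ℝ-linear isometry with Φ ∘ Φ = -id, and Φ maps the subspace of functions taking values in ℂ_m μ-almost everywhere bijectively onto the subspace {f ∈ L²(Ω; ℍ; μ) : m · f(x) = - f(x) · m for μ-almost every x}. -/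
open Quaternion MeasureTheory ENNReal

noncomputable section

/-- An imaginary unit squares to `-1`. -/
theorem inS_mul_self {m : ℍ[ℝ]} (hm : inS m) : m * m = -1 := by
  obtain ⟨h1, h2⟩ := hm
  have h := Quaternion.star_mul_self m
  rw [h1] at h
  have hn : Quaternion.normSq m = 1 := by
    rw [Quaternion.normSq_eq_norm_mul_self, h2]; ring
  rw [hn] at h
  simpa [neg_mul, neg_eq_iff_eq_neg] using h

/-- A quaternion commuting with an imaginary unit `m` lies in the slice `ℂ_m`. -/
theorem commute_mem_slice {m : ℍ[ℝ]} (hm : inS m) (p : ℍ[ℝ])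
    (hc : m * p = p * m) : p ∈ quatSlice m := by
  obtain ⟨h1, h2⟩ := hm
  have hre : m.re = 0 := by
    have := congrArg QuaternionAlgebra.re h1
    simp at this; linarith
  have hn : m.imI^2 + m.imJ^2 + m.imK^2 = 1 := by
    have := Quaternion.normSq_eq_norm_mul_self m
    rw [h2, Quaternion.normSq_def'] at this
    rw [hre] at this; nlinarith [this]
  refine ⟨p.re, m.imI * p.imI + m.imJ * p.imJ + m.imK * p.imK, ?_⟩
  have e1 := congrArg QuaternionAlgebra.imI hc
  have e2 := congrArg QuaternionAlgebra.imJ hc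
  have e3 := congrArg QuaternionAlgebra.imK hc
  simp only [Quaternion.imI_mul, Quaternion.imJ_mul, Quaternion.imK_mul, hre,
    zero_mul, mul_zero, add_zero, zero_add] at e1 e2 e3
  ext
  · simp [Quaternion.re_mul, hre]
  · simp only [Quaternion.imI_add, Quaternion.imI_mul, Quaternion.re_coe, Quaternion.imI_coe,
      Quaternion.imJ_coe, Quaternion.imK_coe, hre, zero_mul, mul_zero, add_zero, zero_add,
      sub_zero, zero_sub, neg_zero]
    linear_combination (-p.imI) * hn + (m.imK/2) * e2 + (-(m.imJ)/2) * e3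
  · simp only [Quaternion.imJ_add, Quaternion.imJ_mul, Quaternion.re_coe, Quaternion.imI_coe,
      Quaternion.imJ_coe, Quaternion.imK_coe, hre, zero_mul, mul_zero, add_zero, zero_add,
      sub_zero, zero_sub, neg_zero]
    linear_combination (-p.imJ) * hn + (m.imI/2) * e3 + (-(m.imK)/2) * e1
  · simp only [Quaternion.imK_add, Quaternion.imK_mul, Quaternion.re_coe, Quaternion.imI_coe,
      Quaternion.imJ_coe, Quaternion.imK_coe, hre, zero_mul, mul_zero, add_zero, zero_add,
      sub_zero, zero_sub, neg_zero]
    linear_combination (-p.imK) * hn + (-(m.imI)/2) * e2 + (m.imJ/2) * e1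

/-- Right multiplication by `n` maps the slice `ℂ_m` into the anticommutant of `m`. -/
theorem slice_mul_anticomm {m n : ℍ[ℝ]} (hm2 : m * m = -1) (hanti : m * n = -(n * m))
    {q : ℍ[ℝ]} (hq : q ∈ quatSlice m) : m * (q * n) = -(q * n * m) := by
  obtain ⟨α, β, rfl⟩ := hq
  have hnm : n * m = -(m * n) := by rw [hanti, neg_neg]
  have h3 : m * n * m = n := by
    rw [mul_assoc, hnm, mul_neg, ← mul_assoc, hm2]; simp
  simp only [Quaternion.mul_coe_eq_smul, Quaternion.coe_mul_eq_smul, mul_add, add_mul,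
    smul_mul_assoc, mul_smul_comm, ← mul_assoc, hm2, h3, hnm, neg_mul, mul_neg, neg_neg,
    neg_one_mul, one_mul, smul_neg, neg_add_rev, neg_one_smul]
  abel

/-- If `q` anticommutes with `m` then `-(q * n)` commutes with `m`. -/
theorem anticomm_mul_commute {m n : ℍ[ℝ]} (hanti : m * n = -(n * m))
    {q : ℍ[ℝ]} (hq : m * q = -(q * m)) : m * (-(q * n)) = (-(q * n)) * m := by
  have hnm : n * m = -(m * n) := by rw [hanti, neg_neg]
  calc m * (-(q * n)) = -((m * q) * n) := by rw [mul_neg, mul_assoc]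
    _ = (q * m) * n := by rw [hq, neg_mul, neg_neg]
    _ = q * (m * n) := by rw [mul_assoc]
    _ = -(q * (n * m)) := by rw [hnm, mul_neg, neg_neg]
    _ = (-(q * n)) * m := by rw [neg_mul, mul_assoc]

/-- Right multiplication by `n` on `L²(Ω; ℍ; μ)` is a surjective ℝ-linear isometry
`Φ` with `Φ² = -id` mapping the a.e. `ℂ_m`-valued functions bijectively onto the
functions anticommuting with `m` a.e. -/
theorem right_mult_maps_slice_to_anticommutant {Ω : Type*} [MeasurableSpace Ω]
    (μ : Measure Ω) (m n : ℍ[ℝ]) (hm : inS m) (hn : inS n)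
    (hanti : m * n = -(n * m)) :
    ∃ Φ : Lp ℍ[ℝ] 2 μ → Lp ℍ[ℝ] 2 μ,
      (∀ f : Lp ℍ[ℝ] 2 μ, ∀ᵐ x ∂μ, (Φ f) x = f x * n) ∧
      (∀ (c : ℝ) (f g : Lp ℍ[ℝ] 2 μ), Φ (c • f + g) = c • Φ f + Φ g) ∧
      (∀ f : Lp ℍ[ℝ] 2 μ, ‖Φ f‖ = ‖f‖) ∧
      Function.Surjective Φ ∧
      (∀ f : Lp ℍ[ℝ] 2 μ, Φ (Φ f) = -f) ∧
      Φ '' {f : Lp ℍ[ℝ] 2 μ | ∀ᵐ x ∂μ, f x ∈ quatSlice m} =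
        {f : Lp ℍ[ℝ] 2 μ | ∀ᵐ x ∂μ, m * f x = -(f x * m)} ∧
      Set.InjOn Φ {f : Lp ℍ[ℝ] 2 μ | ∀ᵐ x ∂μ, f x ∈ quatSlice m} := by
  have hm2 : m * m = -1 := inS_mul_self hm
  have hn2 : n * n = -1 := inS_mul_self hn
  set L : ℍ[ℝ] →L[ℝ] ℍ[ℝ] := (ContinuousLinearMap.mul ℝ ℍ[ℝ]).flip n with hLdef
  have hL : ∀ q : ℍ[ℝ], L q = q * n := fun q => rfl
  have hLnorm : ‖L‖ ≤ 1 := by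
    refine ContinuousLinearMap.opNorm_le_bound _ zero_le_one fun q => ?_
    rw [hL, norm_mul, hn.2, one_mul, mul_one]
  set T : Lp ℍ[ℝ] 2 μ →L[ℝ] Lp ℍ[ℝ] 2 μ := L.compLpL 2 μ with hTdef
  have hcoe : ∀ f : Lp ℍ[ℝ] 2 μ, ∀ᵐ x ∂μ, (T f) x = f x * n := by
    intro f
    filter_upwards [L.coeFn_compLpL f] with x hx
    rw [hx, hL]
  have hTT : ∀ f : Lp ℍ[ℝ] 2 μ, T (T f) = -f := by
    intro f
    refine Lp.ext ?_
    filter_upwards [hcoe (T f), hcoe f, Lp.coeFn_neg f] with x h1 h2 h3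
    rw [h1, h2, h3, mul_assoc, hn2, Pi.neg_apply]
    simp
  have hnorm : ∀ f : Lp ℍ[ℝ] 2 μ, ‖T f‖ = ‖f‖ := by
    intro f
    have hle : ∀ g : Lp ℍ[ℝ] 2 μ, ‖T g‖ ≤ ‖g‖ := fun g => by
      calc ‖T g‖ ≤ ‖L‖ * ‖g‖ := L.norm_compLp_le g
        _ ≤ 1 * ‖g‖ := by gcongr
        _ = ‖g‖ := one_mul _
    refine le_antisymm (hle f) ?_
    calc ‖f‖ = ‖T (T f)‖ := by rw [hTT f, norm_neg]
      _ ≤ ‖T f‖ := hle (T f)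
  refine ⟨fun f => T f, hcoe, ?_, hnorm, ?_, hTT, ?_, ?_⟩
  · intro c f g
    show T (c • f + g) = c • T f + T g
    rw [map_add, _root_.map_smul]
  · intro g
    refine ⟨-(T g), ?_⟩
    show T (-(T g)) = g
    rw [map_neg, hTT g, neg_neg]
  · ext g
    simp only [Set.mem_image, Set.mem_setOf_eq]
    constructor
    · rintro ⟨f, hf, rfl⟩
      filter_upwards [hcoe f, hf] with x h1 h2
      rw [h1]
      exact slice_mul_anticomm hm2 hanti h2
    · intro hg
      refine ⟨-(T g), ?_, ?_⟩
      · filter_upwards [Lp.coeFn_neg (T g), hcoe g, hg] with x h1 h2 h3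
        rw [Pi.neg_apply] at h1
        rw [h1, h2]
        exact commute_mem_slice hm _ (anticomm_mul_commute hanti h3)
      · show T (-(T g)) = g
        rw [map_neg, hTT g, neg_neg]
  · intro f _ g _ hfg
    have hfg' : T f = T g := hfg
    have : T (f - g) = 0 := by rw [map_sub, hfg', sub_self]
    have h0 : ‖f - g‖ = 0 := by rw [← hnorm (f - g), this, norm_zero]
    exact sub_eq_zero.mp (norm_eq_zero.mp h0)
end
end
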